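/- Let (F_v)_{v∈V(G)} be a representation of a connected triangle-free restricted frame graph G. If G has no full star-cutset, then the big vertices of the representation form a clique of G; in particular, there are at most two big vertices. -/

import Mathlib

/-! ## Frames and restricted frame graphs -/

/-- An axis-parallel box in `ℝ²`, i.e. a product `[x1,x2] × [y1,y2]` of two closed
nondegenerate intervals. -/
structure Box : Type where
  x1 : ℝ
  x2 : ℝ
  y1 : ℝ
  y2 : ℝ
  hx : x1 < x2
  hy : y1 < y2

namespace Box

/-- The region bounded by the frame of a box: the closed box itself. -/
def region (B : Box) : Set (ℝ × ℝ) :=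
  {p : ℝ × ℝ | B.x1 ≤ p.1 ∧ p.1 ≤ B.x2 ∧ B.y1 ≤ p.2 ∧ p.2 ≤ B.y2}

/-- The frame of a box: the topological boundary of the closed box. -/
def frame (B : Box) : Set (ℝ × ℝ) :=
  {p : ℝ × ℝ | p ∈ B.region ∧ (p.1 = B.x1 ∨ p.1 = B.x2 ∨ p.2 = B.y1 ∨ p.2 = B.y2)}

/-- The left side `{x1} × [y1,y2]` of a frame. -/
def leftSide (B : Box) : Set (ℝ × ℝ) :=
  {p : ℝ × ℝ | p.1 = B.x1 ∧ B.y1 ≤ p.2 ∧ p.2 ≤ B.y2}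

/-- The right side `{x2} × [y1,y2]` of a frame. -/
def rightSide (B : Box) : Set (ℝ × ℝ) :=
  {p : ℝ × ℝ | p.1 = B.x2 ∧ B.y1 ≤ p.2 ∧ p.2 ≤ B.y2}

/-- The top side `[x1,x2] × {y2}` of a frame. -/
def topSide (B : Box) : Set (ℝ × ℝ) :=
  {p : ℝ × ℝ | p.2 = B.y2 ∧ B.x1 ≤ p.1 ∧ p.1 ≤ B.x2}

/-- The bottom side `[x1,x2] × {y1}` of a frame. -/
def bottomSide (B : Box) : Set (ℝ × ℝ) :=
  {p : ℝ × ℝ | p.2 = B.y1 ∧ B.x1 ≤ p.1 ∧ p.1 ≤ B.x2}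

/-- The four corners of a frame. -/
def corners (B : Box) : Set (ℝ × ℝ) :=
  {(B.x1, B.y1), (B.x1, B.y2), (B.x2, B.y1), (B.x2, B.y2)}

/-- `Box.Inside inner outer` : the frame of `outer` contains the frame of `inner`,
i.e. the two frames are disjoint and the frame of `inner` is contained in the region
bounded by the frame of `outer`. -/
def Inside (inner outer : Box) : Prop :=
  inner.frame ∩ outer.frame = ∅ ∧ inner.frame ⊆ outer.region

/-- `Box.Outside B outer` : the frames are disjoint and `B` is not inside `outer`. -/
def Outside (B outer : Box) : Prop :=
  B.frame ∩ outer.frame = ∅ ∧ ¬ Inside B outer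

end Box

/-- A family of frames `(F v)` is a representation of the graph `G` as a restricted
frame graph: distinct vertices are adjacent iff their frames intersect, and the four
restrictions on the representation hold. -/
structure IsFrameRepresentation {V : Type} (G : SimpleGraph V) (F : V → Box) : Prop where
  /-- Distinct vertices are adjacent iff their frames intersect. -/
  adj_iff : ∀ u v : V, u ≠ v → (G.Adj u v ↔ ((F u).frame ∩ (F v).frame).Nonempty)
  /-- (1) Corners of a frame do not coincide with any point of another frame. -/
  corner_free : ∀ u v : V, u ≠ v → (F u).corners ∩ (F v).frame = ∅
  /-- (2) The left side of a frame does not intersect any other frame. -/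
  left_free : ∀ u v : V, u ≠ v → (F u).leftSide ∩ (F v).frame = ∅
  /-- (3) If the right side of a frame intersects a second frame, this right side
  intersects both the top and the bottom side of that second frame. -/
  right_cross : ∀ u v : V, u ≠ v →
    ((F u).rightSide ∩ (F v).frame).Nonempty →
    ((F u).rightSide ∩ (F v).topSide).Nonempty ∧
      ((F u).rightSide ∩ (F v).bottomSide).Nonempty
  /-- (4) If two frames intersect, no third frame is entirely contained in the
  intersection of the regions bounded by the two frames. -/
  not_nested : ∀ u v w : V, u ≠ v → w ≠ u → w ≠ v →
    ((F u).frame ∩ (F v).frame).Nonempty →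
    ¬ ((F w).frame ⊆ (F u).region ∩ (F v).region)

/-- A graph is a restricted frame graph if it admits a frame representation. -/
def IsRestrictedFrameGraph {V : Type} (G : SimpleGraph V) : Prop :=
  ∃ F : V → Box, IsFrameRepresentation G F

/-! ## Basic graph notions -/

/-- The closed neighborhood `N[u] = {u} ∪ N(u)`. -/
def closedNbhd {V : Type} (G : SimpleGraph V) (u : V) : Set V :=
  insert u (G.neighborSet u)

/-- `G` has a full star-cutset: for some vertex `u` the removal of `N[u]`
disconnects `G`. -/
def HasFullStarCutset {V : Type} (G : SimpleGraph V) : Prop :=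
  ∃ u : V, ¬ (G.induce ((closedNbhd G u)ᶜ)).Preconnected

/-- `v` is a cut-vertex of `G`: its removal disconnects `G`. -/
def IsCutVertex {V : Type} (G : SimpleGraph V) (v : V) : Prop :=
  ¬ (G.induce {u : V | u ≠ v}).Preconnected

/-- `G` is a path graph: its vertices can be enumerated `0, …, n-1` so that two
vertices are adjacent iff they are consecutive. -/
def IsPathGraph {V : Type} (G : SimpleGraph V) : Prop :=
  ∃ (n : ℕ) (e : V ≃ Fin n), ∀ u v : V,
    G.Adj u v ↔ ((e u : ℕ) + 1 = (e v : ℕ) ∨ (e v : ℕ) + 1 = (e u : ℕ))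

/-- `G` is a cycle graph (on at least 3 vertices). -/
def IsCycleGraphOn {V : Type} (G : SimpleGraph V) : Prop :=
  ∃ n : ℕ, 3 ≤ n ∧ ∃ e : V ≃ Fin n, ∀ u v : V,
    G.Adj u v ↔ (((e u : ℕ) + 1) % n = (e v : ℕ) ∨ ((e v : ℕ) + 1) % n = (e u : ℕ))

/-- `x` is a leaf of `T`: it has exactly one neighbor. -/
def IsLeaf {V : Type} (T : SimpleGraph V) (x : V) : Prop :=
  (T.neighborSet x).ncard = 1

/-- `G` is a chandelier with pivot `v`: `G - v` is a tree `T` and `v` is adjacent to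
exactly the leaves of `T`. -/
def IsChandelierWithPivot {V : Type} (G : SimpleGraph V) (v : V) : Prop :=
  (G.induce {u : V | u ≠ v}).IsTree ∧
    ∀ u : ↥{u : V | u ≠ v}, (G.Adj v u.val ↔ IsLeaf (G.induce {u : V | u ≠ v}) u)

/-- `G` is a chandelier. -/
def IsChandelier {V : Type} (G : SimpleGraph V) : Prop :=
  ∃ v : V, IsChandelierWithPivot G v

/-- `G` is a luxury chandelier: a chandelier (with pivot `v` and tree `T = G - v`)
such that the neighbor in `T` of each leaf of `T` has degree 2 in `T`. -/
def IsLuxuryChandelier {V : Type} (G : SimpleGraph V) : Prop :=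
  ∃ v : V, IsChandelierWithPivot G v ∧
    ∀ x y : ↥{u : V | u ≠ v}, (G.induce {u : V | u ≠ v}).Adj x y →
      IsLeaf (G.induce {u : V | u ≠ v}) x →
      ((G.induce {u : V | u ≠ v}).neighborSet y).ncard = 2

/-! ## Multigraphs and subdivisions -/

/-- A loopless multigraph on vertex set `V`: a symmetric multiplicity function. -/
structure Multigraph (V : Type) where
  m : V → V → ℕ
  symm : ∀ u v : V, m u v = m v u
  loopless : ∀ v : V, m v v = 0

/-- The multigraph associated with a simple graph (each edge has multiplicity 1). -/
noncomputable def SimpleGraph.toMultigraph {V : Type} (G : SimpleGraph V) : Multigraph V where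
  m u v := @ite ℕ (G.Adj u v) (Classical.dec _) 1 0
  symm u v := by
    beta_reduce
    by_cases h : G.Adj u v
    · rw [if_pos h, if_pos (G.adj_symm h)]
    · rw [if_neg h, if_neg (fun h' => h (G.adj_symm h'))]
  loopless v := by
    beta_reduce
    rw [if_neg (G.irrefl (v := v))]

/-- The interior (set of internal vertices) of a walk. -/
def walkInterior {V : Type} {G : SimpleGraph V} {a b : V} (p : G.Walk a b) : Set V :=
  {w : V | w ∈ p.support ∧ w ≠ a ∧ w ≠ b}

/-- A witness that the simple graph `H` is a `≥k`-subdivision of the multigraph `G`: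
each edge of `G` (counted with multiplicity) is replaced by a path with at least
`k+1` edges between (the images of) its endpoints, these paths being internally
disjoint from each other and from the branch vertices, and covering all of `H`. -/
structure MultiSubdivision {V W : Type} (G : Multigraph V) (H : SimpleGraph W) (k : ℕ) where
  /-- the embedding of branch vertices -/
  f : V ↪ W
  /-- the path replacing the `i`-th parallel edge between `u` and `v` -/
  path : ∀ u v : V, Fin (G.m u v) → H.Walk (f u) (f v)
  path_symm : ∀ (u v : V) (i : Fin (G.m u v)),
    path v u (Fin.cast (G.symm u v) i) = (path u v i).reverse
  path_ne : ∀ (u v : V) (i i' : Fin (G.m u v)), (i : ℕ) ≠ (i' : ℕ) →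
    path u v i ≠ path u v i'
  isPath : ∀ (u v : V) (i : Fin (G.m u v)), (path u v i).IsPath
  length_le : ∀ (u v : V) (i : Fin (G.m u v)), k + 1 ≤ (path u v i).length
  /-- the paths are internally disjoint from the branch vertices -/
  interior_avoid : ∀ (u v : V) (i : Fin (G.m u v)) (x : V),
    f x ∉ walkInterior (path u v i)
  /-- distinct paths are pairwise internally disjoint -/
  interior_disjoint : ∀ (u v : V) (i : Fin (G.m u v)) (u' v' : V) (i' : Fin (G.m u' v')),
    (walkInterior (path u v i) ∩ walkInterior (path u' v' i')).Nonempty →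
    (u = u' ∧ v = v' ∧ (i : ℕ) = (i' : ℕ)) ∨ (u = v' ∧ v = u' ∧ (i : ℕ) = (i' : ℕ))
  /-- every vertex of `H` is a branch vertex or an internal vertex of a path -/
  vertex_cover : ∀ w : W, (∃ x : V, f x = w) ∨
    ∃ (u v : V) (i : Fin (G.m u v)), w ∈ walkInterior (path u v i)
  /-- every edge of `H` lies on one of the paths -/
  edge_cover : ∀ e ∈ H.edgeSet, ∃ (u v : V) (i : Fin (G.m u v)), e ∈ (path u v i).edges

/-- `H` is a `≥k`-subdivision of the multigraph `G`. -/
def IsSubdivisionGE {V W : Type} (G : Multigraph V) (k : ℕ) (H : SimpleGraph W) : Prop :=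
  Nonempty (MultiSubdivision G H k)

/-- `H` is a subdivision of the simple graph `G` (every edge is replaced by a path
with at least one edge). -/
def IsSubdivision {V W : Type} (G : SimpleGraph V) (H : SimpleGraph W) : Prop :=
  IsSubdivisionGE G.toMultigraph 0 H

namespace Multigraph

/-- The underlying simple graph of a multigraph. -/
def support {V : Type} (G : Multigraph V) : SimpleGraph V where
  Adj u v := 0 < G.m u v
  symm := ⟨by
    intro u v h
    rw [G.symm v u]
    exact h⟩
  loopless := ⟨by
    intro v h
    rw [G.loopless v] at h
    exact Nat.lt_irrefl 0 h⟩

/-- A multigraph is connected if its underlying simple graph is. -/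
def Connected {V : Type} (G : Multigraph V) : Prop :=
  G.support.Connected

/-- A multigraph is 2-connected if it is connected, has at least two vertices, and
deleting any single vertex leaves it connected. -/
def TwoConnected {V : Type} (G : Multigraph V) : Prop :=
  G.support.Connected ∧ (∃ u v : V, u ≠ v) ∧
    ∀ v : V, (G.support.induce {u : V | u ≠ v}).Connected

/-- `v` is a feedback vertex of the multigraph `G`: `G - v` contains no cycle
(where a pair of parallel edges forms a cycle of length 2). -/
def IsFeedbackVertex {V : Type} (G : Multigraph V) (v : V) : Prop :=
  (G.support.induce {u : V | u ≠ v}).IsAcyclic ∧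
    ∀ u w : V, u ≠ v → w ≠ v → G.m u w ≤ 1

end Multigraph

/-! ## Induced cycles and big vertices -/

/-- `C` induces a cycle in `G`. -/
def IsInducedCycle {V : Type} (G : SimpleGraph V) (C : Set V) : Prop :=
  IsCycleGraphOn (G.induce C)

/-- `v` is a big vertex of the (induced cycle on) `C` with respect to the frame
representation `F`: `v ∈ C` and `F v` contains the frame of every vertex of `C`
outside `N[v]`. -/
def IsBigVertexOf {V : Type} (G : SimpleGraph V) (F : V → Box) (C : Set V) (v : V) : Prop :=
  v ∈ C ∧ ∀ u ∈ C, u ≠ v → ¬ G.Adj v u → Box.Inside (F u) (F v)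

/-- `v` is a big vertex of the representation `F`: it is a big vertex of some
induced cycle of `G`. -/
def IsBigVertex {V : Type} (G : SimpleGraph V) (F : V → Box) (v : V) : Prop :=
  ∃ C : Set V, IsInducedCycle G C ∧ IsBigVertexOf G F C v

/-! ## Gluing a chandelier onto a vertex -/

/-- The graph obtained from the disjoint union of `G₁` and `G₂` by identifying the
vertex `v` of `G₁` with the vertex `p` of `G₂`. -/
def glueAt {V₁ V₂ : Type} (G₁ : SimpleGraph V₁) (G₂ : SimpleGraph V₂) (v : V₁) (p : V₂) :
    SimpleGraph (V₁ ⊕ {x : V₂ // x ≠ p}) :=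
  SimpleGraph.fromRel (fun a b =>
    match a, b with
    | Sum.inl u, Sum.inl w => G₁.Adj u w
    | Sum.inr u, Sum.inr w => G₂.Adj u.val w.val
    | Sum.inl u, Sum.inr w => u = v ∧ G₂.Adj p w.val
    | Sum.inr _, Sum.inl _ => False)

/-! ## The multigraphs `Ĥ₁` and `Ĥ₂` -/

/-- The multiplicity matrix of `Ĥ₁` (vertices `a₁ = 0`, `b₁ = 1`, `v₁ = 2`, `v₂ = 3`,
`a₂ = 4`, `b₂ = 5`). -/
def H1hatMatrix : Matrix (Fin 6) (Fin 6) ℕ :=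
  !![0, 2, 1, 0, 0, 0;
     2, 0, 1, 0, 0, 0;
     1, 1, 0, 1, 0, 0;
     0, 0, 1, 0, 1, 1;
     0, 0, 0, 1, 0, 2;
     0, 0, 0, 1, 2, 0]

/-- The multigraph `Ĥ₁`: two disjoint digons `a₁b₁`, `a₂b₂`, and single edges
`a₁v₁`, `b₁v₁`, `v₁v₂`, `a₂v₂`, `b₂v₂`. -/
def H1hat : Multigraph (Fin 6) where
  m u v := H1hatMatrix u v
  symm := by intro u v; fin_cases u <;> fin_cases v <;> rfl
  loopless := by intro v; fin_cases v <;> rfl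

/-- The multiplicity matrix of `Ĥ₂` (vertices `a₁ = 0`, `b₁ = 1`, `v = 2`,
`a₂ = 3`, `b₂ = 4`). -/
def H2hatMatrix : Matrix (Fin 5) (Fin 5) ℕ :=
  !![0, 2, 1, 0, 0;
     2, 0, 1, 0, 0;
     1, 1, 0, 1, 1;
     0, 0, 1, 0, 2;
     0, 0, 1, 2, 0]

/-- The multigraph `Ĥ₂`: two digons `a₁b₁`, `a₂b₂`, and single edges
`a₁v`, `b₁v`, `a₂v`, `b₂v`. -/
def H2hat : Multigraph (Fin 5) where
  m u v := H2hatMatrix u v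
  symm := by intro u v; fin_cases u <;> fin_cases v <;> rfl
  loopless := by intro v; fin_cases v <;> rfl

/-! ## Subdivisions of `K₄` and their type -/

/-- The complete graph on four vertices. -/
def K4 : SimpleGraph (Fin 4) := ⊤

/-- The set of edges of `K₄` that are subdivided at least once in the subdivision
witnessed by `S` (i.e. replaced by a path with at least two edges). -/
def subdividedEdges {W : Type} {H : SimpleGraph W}
    (S : MultiSubdivision K4.toMultigraph H 0) : Set (Sym2 (Fin 4)) :=
  {e : Sym2 (Fin 4) | ∃ (u v : Fin 4) (i : Fin (K4.toMultigraph.m u v)),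
    e = s(u, v) ∧ 2 ≤ (S.path u v i).length}

/-! ## Adding a twin -/

/-- The graph obtained from `G` by adding a twin of `v`: a new vertex, non-adjacent
to `v`, whose neighborhood is exactly `N(v)`. -/
def addTwin {V : Type} (G : SimpleGraph V) (v : V) : SimpleGraph (V ⊕ Unit) :=
  SimpleGraph.fromRel (fun a b =>
    match a, b with
    | Sum.inl u, Sum.inl w => G.Adj u w
    | Sum.inr _, Sum.inl u => G.Adj v u
    | _, _ => False)

/-! ## The construction of Burling and Pawlik et al. -/

/-- A graph-stable set pair: a graph together with a collection of sets of vertices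
(intended: stable sets). -/
structure GSPair : Type 1 where
  V : Type
  G : SimpleGraph V
  S : Set (Set V)

namespace GSPair

/-- The vertex type of `next P`: the original vertices, the vertices `(s, u)` of the
copy `H_s` of the graph for each `s ∈ 𝒮`, and the new vertices `v_{s,t}`. -/
abbrev nextVertex (P : GSPair) : Type :=
  P.V ⊕ ((↥P.S × P.V) ⊕ (↥P.S × ↥P.S))

/-- The adjacency generator for the graph of `next P`. -/
def nextRel (P : GSPair) : P.nextVertex → P.nextVertex → Prop
  | Sum.inl u, Sum.inl v => P.G.Adj u v
  | Sum.inr (Sum.inl (s, u)), Sum.inr (Sum.inl (t, v)) => s = t ∧ P.G.Adj u v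
  | Sum.inr (Sum.inr (s, t)), Sum.inr (Sum.inl (s', v)) => s = s' ∧ v ∈ (t : Set P.V)
  | _, _ => False

/-- The procedure `next`: add a disjoint copy `H_s` of the graph for each `s ∈ 𝒮`, a
vertex `v_{s,t}` whose neighborhood is exactly the copy of `t` inside `H_s` for all
`s, t ∈ 𝒮`, and take as new collection of stable sets all `s ∪ t_s` and
`s ∪ {v_{s,t}}`. -/
def next (P : GSPair) : GSPair where
  V := P.nextVertex
  G := SimpleGraph.fromRel P.nextRel
  S := {A : Set P.nextVertex | ∃ s t : ↥P.S,
    A = (Sum.inl '' (s : Set P.V) : Set P.nextVertex) ∪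
        ((fun u : P.V => (Sum.inr (Sum.inl (s, u)) : P.nextVertex)) '' (t : Set P.V)) ∨
    A = (Sum.inl '' (s : Set P.V) : Set P.nextVertex) ∪ {Sum.inr (Sum.inr (s, t))}}

/-- The starting pair: a single vertex, with the single stable set consisting of
that vertex. -/
def base : GSPair := ⟨PUnit, ⊥, {Set.univ}⟩

/-- `P` is an induced subgraph-stable set pair of `Q`. -/
def IsInducedSubpair (P Q : GSPair) : Prop :=
  ∃ f : P.V ↪ Q.V, (∀ u v : P.V, P.G.Adj u v ↔ Q.G.Adj (f u) (f v)) ∧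
    ∀ A ∈ P.S, ∃ B ∈ Q.S, A = f ⁻¹' B

/-- A graph-stable set pair is constructible if it is an induced subgraph-stable set
pair of some iterate of `next` on the starting pair. -/
def Constructible (P : GSPair) : Prop :=
  ∃ i : ℕ, IsInducedSubpair P (next^[i] base)

end GSPair


section Aux

open Set

lemma Box.frame_preconnected (B : Box) : IsPreconnected B.frame := by
  have hx := B.hx; have hy := B.hy
  set T : Set (ℝ × ℝ) := {p | p.2 = B.y2 ∧ B.x1 ≤ p.1 ∧ p.1 ≤ B.x2} with hT
  set L : Set (ℝ × ℝ) := {p | p.1 = B.x1 ∧ B.y1 ≤ p.2 ∧ p.2 ≤ B.y2} with hL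
  set R : Set (ℝ × ℝ) := {p | p.1 = B.x2 ∧ B.y1 ≤ p.2 ∧ p.2 ≤ B.y2} with hR
  set Bo : Set (ℝ × ℝ) := {p | p.2 = B.y1 ∧ B.x1 ≤ p.1 ∧ p.1 ≤ B.x2} with hBo
  have hTc : Convex ℝ T := by
    have : T = (Set.Icc B.x1 B.x2) ×ˢ ({B.y2} : Set ℝ) := by
      ext p; simp only [hT, Set.mem_setOf_eq, Set.mem_prod, Set.mem_Icc, Set.mem_singleton_iff]; tauto
    rw [this]; exact (convex_Icc _ _).prod (convex_singleton _)
  have hBoc : Convex ℝ Bo := by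
    have : Bo = (Set.Icc B.x1 B.x2) ×ˢ ({B.y1} : Set ℝ) := by
      ext p; simp only [hBo, Set.mem_setOf_eq, Set.mem_prod, Set.mem_Icc, Set.mem_singleton_iff]; tauto
    rw [this]; exact (convex_Icc _ _).prod (convex_singleton _)
  have hLc : Convex ℝ L := by
    have : L = ({B.x1} : Set ℝ) ×ˢ (Set.Icc B.y1 B.y2) := by
      ext p; simp only [hL, Set.mem_setOf_eq, Set.mem_prod, Set.mem_Icc, Set.mem_singleton_iff]
    rw [this]; exact (convex_singleton _).prod (convex_Icc _ _)
  have hRc : Convex ℝ R := by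
    have : R = ({B.x2} : Set ℝ) ×ˢ (Set.Icc B.y1 B.y2) := by
      ext p; simp only [hR, Set.mem_setOf_eq, Set.mem_prod, Set.mem_Icc, Set.mem_singleton_iff]
    rw [this]; exact (convex_singleton _).prod (convex_Icc _ _)
  have hTL : IsPreconnected (T ∪ L) :=
    IsPreconnected.union (B.x1, B.y2) ⟨rfl, le_refl _, hx.le⟩ ⟨rfl, hy.le, le_refl _⟩
      hTc.isPreconnected hLc.isPreconnected
  have hRB : IsPreconnected (R ∪ Bo) :=
    IsPreconnected.union (B.x2, B.y1) ⟨rfl, le_refl _, hy.le⟩ ⟨rfl, hx.le, le_refl _⟩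
      hRc.isPreconnected hBoc.isPreconnected
  have hall : IsPreconnected ((T ∪ L) ∪ (R ∪ Bo)) :=
    IsPreconnected.union (B.x2, B.y2) (Or.inl ⟨rfl, hx.le, le_refl _⟩)
      (Or.inl ⟨rfl, hy.le, le_refl _⟩) hTL hRB
  have hfe : B.frame = (T ∪ L) ∪ (R ∪ Bo) := by
    ext p
    simp only [Box.frame, Box.region, Set.mem_setOf_eq, Set.mem_union, hT, hL, hR, hBo]
    constructor
    · rintro ⟨⟨h1, h2, h3, h4⟩, hc⟩
      rcases hc with h | h | h | h
      · exact Or.inl (Or.inr ⟨h, h3, h4⟩)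
      · exact Or.inr (Or.inl ⟨h, h3, h4⟩)
      · exact Or.inr (Or.inr ⟨h, h1, h2⟩)
      · exact Or.inl (Or.inl ⟨h, h1, h2⟩)
    · rintro ((⟨h, h1, h2⟩ | ⟨h, h1, h2⟩) | (⟨h, h1, h2⟩ | ⟨h, h1, h2⟩))
      · exact ⟨⟨h1, h2, by rw [h]; exact hy.le, by rw [h]⟩, Or.inr (Or.inr (Or.inr h))⟩
      · exact ⟨⟨by rw [h], by rw [h]; exact hx.le, h1, h2⟩, Or.inl h⟩
      · exact ⟨⟨by rw [h]; exact hx.le, by rw [h], h1, h2⟩, Or.inr (Or.inl h)⟩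
      · exact ⟨⟨h1, h2, by rw [h], by rw [h]; exact hy.le⟩, Or.inr (Or.inr (Or.inl h))⟩
  rw [hfe]; exact hall

lemma Box.region_closed (B : Box) : IsClosed B.region := by
  have : B.region = {p : ℝ × ℝ | B.x1 ≤ p.1} ∩ ({p | p.1 ≤ B.x2} ∩
      ({p | B.y1 ≤ p.2} ∩ {p | p.2 ≤ B.y2})) := by
    ext p; simp [Box.region, and_assoc]
  rw [this]
  exact (isClosed_le continuous_const continuous_fst).inter
    ((isClosed_le continuous_fst continuous_const).inter
      ((isClosed_le continuous_const continuous_snd).inter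
        (isClosed_le continuous_snd continuous_const)))

lemma box_step (A B C : Box) (hAC : A.Inside C)
    (hAB : ((A.frame : Set (ℝ × ℝ)) ∩ B.frame).Nonempty)
    (hBC : B.frame ∩ C.frame = ∅) : B.Inside C := by
  refine ⟨hBC, ?_⟩
  by_contra hsub
  obtain ⟨q, hqB, hqnot⟩ := Set.not_subset.mp hsub
  obtain ⟨q0, hq0A, hq0B⟩ := hAB
  set U : Set (ℝ × ℝ) := {p | C.x1 < p.1} ∩ ({p | p.1 < C.x2} ∩
      ({p | C.y1 < p.2} ∩ {p | p.2 < C.y2})) with hU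
  have hUopen : IsOpen U :=
    (isOpen_lt continuous_const continuous_fst).inter
      ((isOpen_lt continuous_fst continuous_const).inter
        ((isOpen_lt continuous_const continuous_snd).inter
          (isOpen_lt continuous_snd continuous_const)))
  have hstrict : ∀ p ∈ C.region, p ∉ C.frame → p ∈ U := by
    intro p hp hnf
    have hne : ¬ (p.1 = C.x1 ∨ p.1 = C.x2 ∨ p.2 = C.y1 ∨ p.2 = C.y2) :=
      fun hd => hnf ⟨hp, hd⟩
    push_neg at hne
    obtain ⟨h1, h2, h3, h4⟩ := hp
    exact ⟨h1.lt_of_ne (Ne.symm hne.1), h2.lt_of_ne hne.2.1,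
      h3.lt_of_ne (Ne.symm hne.2.2.1), h4.lt_of_ne hne.2.2.2⟩
  have hcov : B.frame ⊆ U ∪ C.regionᶜ := by
    intro p hp
    by_cases hpr : p ∈ C.region
    · have hnf : p ∉ C.frame := fun hf =>
        Set.eq_empty_iff_forall_notMem.mp hBC p ⟨hp, hf⟩
      exact Or.inl (hstrict p hpr hnf)
    · exact Or.inr hpr
  have h1 : (B.frame ∩ U).Nonempty := by
    refine ⟨q0, hq0B, ?_⟩
    have hq0r : q0 ∈ C.region := hAC.2 hq0A
    have hq0nf : q0 ∉ C.frame := fun hf =>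
      Set.eq_empty_iff_forall_notMem.mp hAC.1 q0 ⟨hq0A, hf⟩
    exact hstrict q0 hq0r hq0nf
  have h2 : (B.frame ∩ C.regionᶜ).Nonempty := ⟨q, hqB, hqnot⟩
  obtain ⟨z, hzB, hzU, hzc⟩ :=
    (Box.frame_preconnected B) U C.regionᶜ hUopen (Box.region_closed C).isOpen_compl hcov h1 h2
  exact hzc ⟨hzU.1.le, hzU.2.1.le, hzU.2.2.1.le, hzU.2.2.2.le⟩

lemma not_inside_both (A B : Box) (h1 : A.Inside B) (h2 : B.Inside A) : False := by
  have hA : ((A.x1, A.y1) : ℝ × ℝ) ∈ A.frame :=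
    ⟨⟨le_refl _, A.hx.le, le_refl _, A.hy.le⟩, Or.inl rfl⟩
  have hB : ((B.x1, B.y1) : ℝ × ℝ) ∈ B.frame :=
    ⟨⟨le_refl _, B.hx.le, le_refl _, B.hy.le⟩, Or.inl rfl⟩
  have h1' : ((A.x1, A.y1) : ℝ × ℝ) ∈ B.region := h1.2 hA
  have h2' : ((B.x1, B.y1) : ℝ × ℝ) ∈ A.region := h2.2 hB
  have hxx : A.x1 = B.x1 := le_antisymm h2'.1 h1'.1
  have : ((A.x1, A.y1) : ℝ × ℝ) ∈ B.frame := ⟨h1', Or.inl hxx⟩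
  exact Set.eq_empty_iff_forall_notMem.mp h1.1 (A.x1, A.y1) ⟨hA, this⟩

end Aux

/-- Let `(F v)` be a representation of a connected triangle-free
restricted frame graph `G`. If `G` has no full star-cutset, then the big vertices
of the representation form a clique of `G`; in particular there are at most two
big vertices. -/
theorem big_vertices_form_clique
    {V : Type} [Fintype V] (G : SimpleGraph V) (F : V → Box)
    (hF : IsFrameRepresentation G F) (hconn : G.Connected) (htf : G.CliqueFree 3)
    (hnsc : ¬ HasFullStarCutset G) :
    G.IsClique {v : V | IsBigVertex G F v} ∧ {v : V | IsBigVertex G F v}.ncard ≤ 2 := by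
  classical
  have hpre : ∀ u : V, (G.induce ((closedNbhd G u)ᶜ)).Preconnected := by
    intro u; by_contra h; exact hnsc ⟨u, h⟩
  have key : ∀ v : V, IsBigVertex G F v → ∀ w : V, w ≠ v → ¬ G.Adj v w →
      Box.Inside (F w) (F v) := by
    intro v hv w hwv hadj
    obtain ⟨C, ⟨n, hn3, e, he⟩, hvC, hbig⟩ := hv
    have hn3' : n ≠ 3 := by
      intro hn
      subst hn
      set a := e.symm ⟨0, by omega⟩ with ha
      set b := e.symm ⟨1, by omega⟩ with hb
      set c := e.symm ⟨2, by omega⟩ with hc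
      have hea : (e a : ℕ) = 0 := by rw [ha, Equiv.apply_symm_apply]
      have heb : (e b : ℕ) = 1 := by rw [hb, Equiv.apply_symm_apply]
      have hec : (e c : ℕ) = 2 := by rw [hc, Equiv.apply_symm_apply]
      have hab : (G.induce C).Adj a b := (he a b).mpr (Or.inl (by rw [hea, heb]))
      have hbc : (G.induce C).Adj b c := (he b c).mpr (Or.inl (by rw [heb, hec]))
      have hac : (G.induce C).Adj a c := (he a c).mpr (Or.inr (by rw [hea, hec]))
      have hab' : G.Adj ↑a ↑b := hab
      have hbc' : G.Adj ↑b ↑c := hbc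
      have hac' : G.Adj ↑a ↑c := hac
      exact htf {↑a, ↑b, ↑c} (SimpleGraph.is3Clique_triple_iff.mpr ⟨hab', hac', hbc'⟩)
    have hn4 : 4 ≤ n := by omega
    set vc : ↥C := ⟨v, hvC⟩ with hvc
    set k := (e vc : ℕ) with hk
    have hkn : k < n := (e vc).isLt
    set idx : Fin n := ⟨(k + 2) % n, Nat.mod_lt _ (by omega)⟩ with hidx
    set c : ↥C := e.symm idx with hc
    have heC : (e c : ℕ) = (k + 2) % n := by rw [hc, Equiv.apply_symm_apply]
    have hcvne : (c : V) ≠ v := by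
      intro h
      have hcv : c = vc := Subtype.ext h
      have h2 : (k + 2) % n = k := by rw [← heC, hcv]
      have hmod : k % n = (k + 2) % n := by rw [h2, Nat.mod_eq_of_lt hkn]
      have hdvd := (Nat.modEq_iff_dvd' (by omega : k ≤ k + 2)).mp hmod
      have := Nat.le_of_dvd (by omega) hdvd
      omega
    have hcadj : ¬ G.Adj v ↑c := by
      intro h
      have h' : (G.induce C).Adj vc c := h
      rcases (he vc c).mp h' with h1 | h1
      · rw [heC, ← hk] at h1
        have hdvd := (Nat.modEq_iff_dvd' (by omega : k + 1 ≤ k + 2)).mp h1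
        have := Nat.le_of_dvd (by omega) hdvd
        omega
      · rw [heC, ← hk, Nat.mod_add_mod] at h1
        have hmod : k % n = (k + 3) % n := by rw [h1, Nat.mod_eq_of_lt hkn]
        have hdvd := (Nat.modEq_iff_dvd' (by omega : k ≤ k + 3)).mp hmod
        have := Nat.le_of_dvd (by omega) hdvd
        omega
    have hcIn : Box.Inside (F ↑c) (F v) := hbig ↑c c.2 hcvne hcadj
    have hcS : (c : V) ∈ (closedNbhd G v)ᶜ := by
      intro hmem
      rcases hmem with h | h
      · exact hcvne h
      · exact hcadj h
    have hwS : w ∈ (closedNbhd G v)ᶜ := by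
      intro hmem
      rcases hmem with h | h
      · exact hwv h
      · exact hadj h
    have main : ∀ (x y : ↥((closedNbhd G v)ᶜ))
        (p : (G.induce ((closedNbhd G v)ᶜ)).Walk x y),
        Box.Inside (F ↑x) (F v) → Box.Inside (F ↑y) (F v) := by
      intro x y p
      induction p with
      | nil => exact id
      | @cons x' m y' h q ih =>
        intro hx
        apply ih
        have hxm : G.Adj ↑x' ↑m := h
        have hne : (↑x' : V) ≠ ↑m := hxm.ne
        have hint : ((F ↑x').frame ∩ (F ↑m).frame).Nonempty := (hF.adj_iff _ _ hne).mp hxm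
        have hm1 : (↑m : V) ≠ v := fun hh => m.2 (Or.inl hh)
        have hm2 : ¬ G.Adj v ↑m := fun hh => m.2 (Or.inr hh)
        have hdisj : (F ↑m).frame ∩ (F v).frame = ∅ := by
          by_contra hne2
          rw [← Ne, ← Set.nonempty_iff_ne_empty] at hne2
          exact hm2 ((hF.adj_iff v ↑m (Ne.symm hm1)).mpr (by rwa [Set.inter_comm]))
        exact box_step (F ↑x') (F ↑m) (F v) hx hint hdisj
    obtain ⟨p⟩ := hpre v ⟨↑c, hcS⟩ ⟨w, hwS⟩
    exact main _ _ p hcIn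
  have hclique : G.IsClique {v : V | IsBigVertex G F v} := by
    intro v hv w hw hne
    by_contra hadj
    exact not_inside_both (F w) (F v)
      (key v hv w (Ne.symm hne) hadj)
      (key w hw v hne (fun h => hadj h.symm))
  refine ⟨hclique, ?_⟩
  by_contra hcard
  push_neg at hcard
  obtain ⟨t, hts, htc⟩ := Set.exists_subset_card_eq (show 3 ≤ _ from hcard)
  obtain ⟨x, y, z, hxy, hxz, hyz, rfl⟩ := Set.ncard_eq_three.mp htc
  have hx : x ∈ {v : V | IsBigVertex G F v} := hts (by simp)
  have hy : y ∈ {v : V | IsBigVertex G F v} := hts (by simp)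
  have hz : z ∈ {v : V | IsBigVertex G F v} := hts (by simp)
  exact htf {x, y, z} (SimpleGraph.is3Clique_triple_iff.mpr
    ⟨hclique hx hy hxy, hclique hx hz hxz, hclique hy hz hyz⟩)
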